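/- The Gauss-Epple action of B_n on {1,…,n} × ℤ is transitive: for all pairs (a,b) and (a',b') in {1,…,n} × ℤ there exists a braid β ∈ B_n such that GE(β)(a,b) = (a',b'). -/

import Mathlib

/-- The braid relations: `σᵢσⱼσᵢ = σⱼσᵢσⱼ` when `j = i + 1`, and
`σᵢσⱼ = σⱼσᵢ` when `|i - j| ≥ 2`. -/
def braidRels (n : ℕ) : Set (FreeGroup (Fin (n - 1))) :=
  {r | (∃ i j : Fin (n - 1), (j : ℕ) = (i : ℕ) + 1 ∧
        r = .of i * .of j * .of i * (.of j * .of i * .of j)⁻¹) ∨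
       (∃ i j : Fin (n - 1), (i : ℕ) + 2 ≤ (j : ℕ) ∧
        r = .of i * .of j * (.of j * .of i)⁻¹)}

/-- The braid group `B_n`, presented by the Artin generators `σ_1, …, σ_{n-1}`
(indexed by `Fin (n-1)`) and the braid relations. -/
abbrev BraidGroup (n : ℕ) := PresentedGroup (braidRels n)

/-- The Artin generator `σ_{k+1}` (0-based index `k`). -/
def braidGen {n : ℕ} (i : Fin (n - 1)) : BraidGroup n := PresentedGroup.of i

/-- The strand index `k` (viewed inside `Fin n`). -/
def lo {n : ℕ} (k : Fin (n - 1)) : Fin n := ⟨k, by have := k.isLt; omega⟩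

/-- The strand index `k + 1` (viewed inside `Fin n`). -/
def hi {n : ℕ} (k : Fin (n - 1)) : Fin n := ⟨(k : ℕ) + 1, by have := k.isLt; omega⟩

/-- The Gauss-Epple permutation of `{1,…,n} × ℤ` attached to the Artin generator `σ_k`:
it fixes `(a,b)` for `a ∉ {k, k+1}`, sends `(k, b)` to `(k+1, b)` and
`(k+1, b)` to `(k, b+1)`. -/
def geFun {n : ℕ} (k : Fin (n - 1)) (p : Fin n × ℤ) : Fin n × ℤ :=
  if p.1 = lo k then (hi k, p.2)
  else if p.1 = hi k then (lo k, p.2 + 1)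
  else p

/-- The Gauss-Epple action of `B_n` on `{1,…,n} × ℤ` is transitive. -/
theorem gauss_epple_transitive (n : ℕ) (hn : 2 ≤ n)
    (GE : BraidGroup n →* Equiv.Perm (Fin n × ℤ))
    (hGE : ∀ (k : Fin (n - 1)) (p : Fin n × ℤ), GE (braidGen k) p = geFun k p)
    (p q : Fin n × ℤ) :
    ∃ β : BraidGroup n, GE β p = q := by
  classical
  have hn1 : 0 < n - 1 := by omega
  set z0 : Fin n := ⟨0, by omega⟩ with hz0
  set k0 : Fin (n - 1) := ⟨0, hn1⟩ with hk0
  have hz0lo : z0 = lo k0 := by simp [lo, hz0, hk0]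
  have slo : ∀ (k : Fin (n - 1)) (b : ℤ), GE (braidGen k) (lo k, b) = (hi k, b) := by
    intro k b; rw [hGE]; simp [geFun]
  have shi : ∀ (k : Fin (n - 1)) (b : ℤ), GE (braidGen k) (hi k, b) = (lo k, b + 1) := by
    intro k b; rw [hGE]
    have h1 : (hi k : Fin n) ≠ lo k := by
      simp [lo, hi, Fin.ext_iff]
    simp [geFun, h1]
  have htrans : ∀ {p q r : Fin n × ℤ}, (∃ β, GE β p = q) → (∃ β, GE β q = r) →
      (∃ β, GE β p = r) := by
    rintro p q r ⟨β, hβ⟩ ⟨γ, hγ⟩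
    exact ⟨γ * β, by rw [map_mul, Equiv.Perm.mul_apply, hβ, hγ]⟩
  have hsymm : ∀ {p q : Fin n × ℤ}, (∃ β, GE β p = q) → (∃ β, GE β q = p) := by
    rintro p q ⟨β, hβ⟩
    refine ⟨β⁻¹, ?_⟩
    rw [map_inv, ← hβ, ← Equiv.Perm.mul_apply, inv_mul_cancel, Equiv.Perm.one_apply]
  -- move any point to strand 0
  have toz : ∀ (m : ℕ) (a : Fin n) (b : ℤ), (a : ℕ) = m → ∃ c, ∃ β, GE β (a, b) = (z0, c) := by
    intro m
    induction m with
    | zero =>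
      intro a b h
      refine ⟨b, 1, ?_⟩
      rw [map_one, Equiv.Perm.one_apply]
      congr 1
      exact Fin.ext (by simp [hz0, h])
    | succ m ih =>
      intro a b h
      have hm : m < n - 1 := by have := a.isLt; omega
      set k : Fin (n - 1) := ⟨m, hm⟩ with hk
      have ha : a = hi k := Fin.ext (by simp [hi, hk, h])
      obtain ⟨c, β, hβ⟩ := ih (lo k) (b + 1) (by simp [lo, hk])
      refine ⟨c, β * braidGen k, ?_⟩
      rw [map_mul, Equiv.Perm.mul_apply, ha, shi, hβ]
  -- vertical moves on strand 0
  have gstep : ∀ b : ℤ, GE (braidGen k0 * braidGen k0) (z0, b) = (z0, b + 1) := by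
    intro b
    rw [map_mul, Equiv.Perm.mul_apply, hz0lo, slo, shi]
  have gz : ∀ (m : ℤ) (b : ℤ), GE ((braidGen k0 * braidGen k0) ^ m) (z0, b) = (z0, b + m) := by
    intro m
    induction m using Int.induction_on with
    | zero => intro b; simp
    | succ i ih =>
      intro b
      rw [zpow_add_one, map_mul, Equiv.Perm.mul_apply, gstep, ih]
      congr 1; ring
    | pred i ih =>
      intro b
      have hinv : GE ((braidGen k0 * braidGen k0)⁻¹) (z0, b) = (z0, b - 1) := by
        rw [map_inv]
        have := gstep (b - 1)
        calc (GE (braidGen k0 * braidGen k0))⁻¹ (z0, b)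
            = (GE (braidGen k0 * braidGen k0))⁻¹
                (GE (braidGen k0 * braidGen k0) (z0, b - 1)) := by
              rw [this]; norm_num
          _ = (z0, b - 1) := by rw [← Equiv.Perm.mul_apply, inv_mul_cancel, Equiv.Perm.one_apply]
      rw [zpow_sub_one, map_mul, Equiv.Perm.mul_apply, hinv, ih]
      congr 1; ring
  obtain ⟨c₁, β₁, h₁⟩ := toz (p.1 : ℕ) p.1 p.2 rfl
  obtain ⟨c₂, β₂, h₂⟩ := toz (q.1 : ℕ) q.1 q.2 rfl
  have hp : ∃ β, GE β p = (z0, c₁) := ⟨β₁, by rw [← h₁]⟩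
  have hq : ∃ β, GE β (z0, c₂) = q := hsymm ⟨β₂, by rw [← h₂]⟩
  have hmid : ∃ β, GE β (z0, c₁) = (z0, c₂) :=
    ⟨(braidGen k0 * braidGen k0) ^ (c₂ - c₁), by rw [gz]; congr 1; ring⟩
  exact htrans (htrans hp hmid) hq
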